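/- Let 0 < c < 1 be real and let N ≥ 1 and 1 ≤ i ≤ N be integers. Then 0 < ∏_{j ∈ {1,…,N}, j ≠ i} (c + j − i)/(j − i) ≤ ∏_{j=2}^{N} (c + j − 1)/(j − 1). -/

import Mathlib

open Finset

theorem stmt17 (c : ℝ) (hc0 : 0 < c) (hc1 : c < 1) (N i : ℕ) (h1 : 1 ≤ i) (h2 : i ≤ N) :
    0 < ∏ j ∈ (Finset.Icc 1 N).erase i, (c + (j : ℝ) - (i : ℝ)) / ((j : ℝ) - (i : ℝ)) ∧
    ∏ j ∈ (Finset.Icc 1 N).erase i, (c + (j : ℝ) - (i : ℝ)) / ((j : ℝ) - (i : ℝ)) ≤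
      ∏ j ∈ Finset.Icc 2 N, (c + (j : ℝ) - 1) / ((j : ℝ) - 1) := by
  set f : ℕ → ℝ := fun j => (c + (j : ℝ) - (i : ℝ)) / ((j : ℝ) - (i : ℝ)) with hf
  set g : ℕ → ℝ := fun k => (c + (k : ℝ)) / (k : ℝ) with hg
  -- split the erased interval
  have hsplit : (Finset.Icc 1 N).erase i = Finset.Icc 1 (i-1) ∪ Finset.Icc (i+1) N := by
    ext j; simp [Finset.mem_erase, Finset.mem_Icc]; omega
  have hdisj : Disjoint (Finset.Icc 1 (i-1)) (Finset.Icc (i+1) N) := by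
    rw [Finset.disjoint_left]; intro j hj hj'
    simp [Finset.mem_Icc] at hj hj'; omega
  -- the right piece as a product of g
  have hshift : ∏ j ∈ Finset.Icc (i+1) N, f j = ∏ k ∈ Finset.Icc 1 (N-i), g k := by
    have hmap : (Finset.Icc 1 (N - i)).map (addRightEmbedding i) = Finset.Icc (i+1) N := by
      rw [Finset.map_add_right_Icc]; congr 1 <;> omega
    rw [← hmap, Finset.prod_map]
    apply Finset.prod_congr rfl
    intro k hk
    simp only [addRightEmbedding_apply, hf, hg]
    push_cast
    ring_nf
  -- RHS as a product of g
  have hRHS : ∏ j ∈ Finset.Icc 2 N, (c + (j : ℝ) - 1) / ((j : ℝ) - 1)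
      = ∏ k ∈ Finset.Icc 1 (N-1), g k := by
    have hmap : (Finset.Icc 1 (N - 1)).map (addRightEmbedding 1) = Finset.Icc 2 N := by
      rw [Finset.map_add_right_Icc]; congr 1 <;> omega
    rw [← hmap, Finset.prod_map]
    apply Finset.prod_congr rfl
    intro k hk
    simp only [addRightEmbedding_apply, hg]
    push_cast
    ring_nf
  -- facts about g
  have hg1 : ∀ k ∈ Finset.Icc 1 (N-1), (1:ℝ) ≤ g k := by
    intro k hk
    simp [Finset.mem_Icc] at hk
    have hk' : (1:ℝ) ≤ (k:ℝ) := by exact_mod_cast hk.1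
    rw [hg, le_div_iff₀ (by linarith)]
    linarith
  have hgpos : ∀ k ∈ Finset.Icc 1 (N-i), 0 < g k := by
    intro k hk
    simp [Finset.mem_Icc] at hk
    have hk' : (1:ℝ) ≤ (k:ℝ) := by exact_mod_cast hk.1
    exact div_pos (by linarith) (by linarith)
  -- facts about the left piece
  have hfpos : ∀ j ∈ Finset.Icc 1 (i-1), 0 < f j := by
    intro j hj
    simp [Finset.mem_Icc] at hj
    have hji : (j:ℝ) + 1 ≤ (i:ℝ) := by exact_mod_cast (by omega : j + 1 ≤ i)
    have hnum : c + (j:ℝ) - i < 0 := by linarith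
    have hden : (j:ℝ) - i < 0 := by linarith
    exact div_pos_of_neg_of_neg hnum hden
  have hfle1 : ∀ j ∈ Finset.Icc 1 (i-1), f j ≤ 1 := by
    intro j hj
    simp [Finset.mem_Icc] at hj
    have hji : (j:ℝ) + 1 ≤ (i:ℝ) := by exact_mod_cast (by omega : j + 1 ≤ i)
    have hden : (j:ℝ) - i < 0 := by linarith
    rw [hf, div_le_one_iff]
    right; right
    exact ⟨hden, by linarith⟩
  have hAle1 : ∏ j ∈ Finset.Icc 1 (i-1), f j ≤ 1 :=
    Finset.prod_le_one (fun j hj => (hfpos j hj).le) hfle1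
  have hApos : 0 < ∏ j ∈ Finset.Icc 1 (i-1), f j := Finset.prod_pos hfpos
  have hBpos : 0 < ∏ j ∈ Finset.Icc (i+1) N, f j := by
    rw [hshift]; exact Finset.prod_pos hgpos
  have hprodsplit : ∏ j ∈ (Finset.Icc 1 N).erase i, f j
      = (∏ j ∈ Finset.Icc 1 (i-1), f j) * ∏ j ∈ Finset.Icc (i+1) N, f j := by
    rw [hsplit, Finset.prod_union hdisj]
  constructor
  · rw [hprodsplit]; exact mul_pos hApos hBpos
  · rw [hprodsplit, hRHS]
    have hsub : Finset.Icc 1 (N-i) ⊆ Finset.Icc 1 (N-1) := by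
      apply Finset.Icc_subset_Icc_right; omega
    have hB : ∏ k ∈ Finset.Icc 1 (N-i), g k ≤ ∏ k ∈ Finset.Icc 1 (N-1), g k := by
      rw [← Finset.prod_sdiff hsub]
      have hone : (1:ℝ) ≤ ∏ k ∈ Finset.Icc 1 (N-1) \ Finset.Icc 1 (N-i), g k := by
        have := Finset.prod_le_prod (s := Finset.Icc 1 (N-1) \ Finset.Icc 1 (N-i))
          (f := fun _ => (1:ℝ)) (g := g)
          (fun k _ => zero_le_one) (fun k hk => hg1 k (Finset.mem_sdiff.mp hk).1)
        simpa using this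
      have hpos : 0 ≤ ∏ k ∈ Finset.Icc 1 (N-i), g k :=
        (Finset.prod_pos hgpos).le
      exact le_mul_of_one_le_left hpos hone
    calc (∏ j ∈ Finset.Icc 1 (i-1), f j) * ∏ j ∈ Finset.Icc (i+1) N, f j
        ≤ 1 * ∏ j ∈ Finset.Icc (i+1) N, f j := by
          apply mul_le_mul_of_nonneg_right hAle1 hBpos.le
      _ = ∏ j ∈ Finset.Icc (i+1) N, f j := one_mul _
      _ = ∏ k ∈ Finset.Icc 1 (N-i), g k := hshift
      _ ≤ ∏ k ∈ Finset.Icc 1 (N-1), g k := hB
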